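/- arXiv:1412.5581 — 11 statements merged into one kernel-verified Lean document; each statement's English description precedes it below -/
import Mathlib

section
/- The characteristic polynomial of F satisfies det(F − λI) = λ⁴ − 2vλ² − u² for every real λ. -/
theorem char_poly_F (e1 e2 e3 b1 b2 b3 u v : ℝ)
    (hu : u = e1 * b1 + e2 * b2 + e3 * b3)
    (hv : v = ((e1 ^ 2 + e2 ^ 2 + e3 ^ 2) - (b1 ^ 2 + b2 ^ 2 + b3 ^ 2)) / 2)
    (F : Matrix (Fin 4) (Fin 4) ℝ)
    (hF : F = !![0, b3, -b2, e1; -b3, 0, b1, e2; b2, -b1, 0, e3; e1, e2, e3, 0]) :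
    ∀ l : ℝ, (F - l • (1 : Matrix (Fin 4) (Fin 4) ℝ)).det = l ^ 4 - 2 * v * l ^ 2 - u ^ 2 := by
  intro l
  subst hu hv hF
  have : (!![0, b3, -b2, e1; -b3, 0, b1, e2; b2, -b1, 0, e3; e1, e2, e3, 0]
      - l • (1 : Matrix (Fin 4) (Fin 4) ℝ)) =
      !![-l, b3, -b2, e1; -b3, -l, b1, e2; b2, -b1, -l, e3; e1, e2, e3, -l] := by
    ext i j
    fin_cases i <;> fin_cases j <;>
      simp [Matrix.one_apply, Matrix.smul_apply]
  rw [this]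
  simp [Matrix.det_succ_row_zero, Fin.sum_univ_succ, Fin.succAbove, Fin.castSucc, Fin.castAdd, Fin.castLE]
  ring
end

section
/- F³ = (σ² − θ²)·F + σθ·F̃. -/
set_option maxHeartbeats 1000000


theorem Fcubed
(e1 e2 e3 b1 b2 b3 u v σ θ : ℝ)
    (hu : u = e1 * b1 + e2 * b2 + e3 * b3)
    (hv : v = ((e1 ^ 2 + e2 ^ 2 + e3 ^ 2) - (b1 ^ 2 + b2 ^ 2 + b3 ^ 2)) / 2)
    (hσ : σ = Real.sqrt (Real.sqrt (u ^ 2 + v ^ 2) + v))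
    (hθ : θ = (if u < 0 then (-1 : ℝ) else 1) * Real.sqrt (Real.sqrt (u ^ 2 + v ^ 2) - v))
    (F Ft : Matrix (Fin 4) (Fin 4) ℝ)
    (hF : F = !![0, b3, -b2, e1; -b3, 0, b1, e2; b2, -b1, 0, e3; e1, e2, e3, 0])
    (hFt : Ft = !![0, -e3, e2, b1; e3, 0, -e1, b2; -e2, e1, 0, b3; b1, b2, b3, 0])
    :
    F ^ 3 = (σ ^ 2 - θ ^ 2) • F + (σ * θ) • Ft := by
  set A := Real.sqrt (u ^ 2 + v ^ 2) with hA
  have hAv : |v| ≤ A := by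
    rw [hA, ← Real.sqrt_sq_eq_abs]
    exact Real.sqrt_le_sqrt (by nlinarith)
  have h1 : 0 ≤ A + v := by cases abs_le.mp hAv; linarith
  have h2 : 0 ≤ A - v := by cases abs_le.mp hAv; linarith
  have hσ2 : σ ^ 2 = A + v := by rw [hσ, Real.sq_sqrt h1]
  have hθ2 : θ ^ 2 = A - v := by
    rw [hθ, mul_pow, Real.sq_sqrt h2]
    split <;> ring
  have hσθ : σ * θ = u := by
    rw [hσ, hθ]
    have : Real.sqrt (A + v) * Real.sqrt (A - v) = |u| := by
      rw [← Real.sqrt_mul h1]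
      have : (A + v) * (A - v) = u ^ 2 := by
        have hA2 : A ^ 2 = u ^ 2 + v ^ 2 := Real.sq_sqrt (by positivity)
        nlinarith
      rw [this, Real.sqrt_sq_eq_abs]
    rcases lt_or_ge u 0 with h | h
    · simp only [if_pos h]
      rw [show Real.sqrt (A + v) * ((-1 : ℝ) * Real.sqrt (A - v)) =
        -(Real.sqrt (A + v) * Real.sqrt (A - v)) by ring, this, abs_of_neg h]; ring
    · simp only [if_neg (not_lt.mpr h), one_mul, this, abs_of_nonneg h]
  have hd : σ ^ 2 - θ ^ 2 = 2 * v := by rw [hσ2, hθ2]; ring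
  rw [hd, hσθ, hF, hFt, hu, hv, pow_succ, pow_succ, pow_one]
  ext i j
  fin_cases i <;> fin_cases j <;>
    simp [Matrix.mul_apply, Fin.sum_univ_four] <;> ring
end

section
/- F·T = (σ² − θ²)·F + 2σθ·F̃, where T = F² + F̃². -/
set_option maxHeartbeats 4000000

theorem F_mul_T
(e1 e2 e3 b1 b2 b3 u v σ θ : ℝ)
    (hu : u = e1 * b1 + e2 * b2 + e3 * b3)
    (hv : v = ((e1 ^ 2 + e2 ^ 2 + e3 ^ 2) - (b1 ^ 2 + b2 ^ 2 + b3 ^ 2)) / 2)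
    (hσ : σ = Real.sqrt (Real.sqrt (u ^ 2 + v ^ 2) + v))
    (hθ : θ = (if u < 0 then (-1 : ℝ) else 1) * Real.sqrt (Real.sqrt (u ^ 2 + v ^ 2) - v))
    (F Ft : Matrix (Fin 4) (Fin 4) ℝ)
    (hF : F = !![0, b3, -b2, e1; -b3, 0, b1, e2; b2, -b1, 0, e3; e1, e2, e3, 0])
    (hFt : Ft = !![0, -e3, e2, b1; e3, 0, -e1, b2; -e2, e1, 0, b3; b1, b2, b3, 0])
    (T : Matrix (Fin 4) (Fin 4) ℝ) (hT : T = F ^ 2 + Ft ^ 2) :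
    F * T = (σ ^ 2 - θ ^ 2) • F + (2 * σ * θ) • Ft := by
  have hs : Real.sqrt (v ^ 2) ≤ Real.sqrt (u ^ 2 + v ^ 2) := by
    apply Real.sqrt_le_sqrt; nlinarith [sq_nonneg u]
  have hv2 : Real.sqrt (v ^ 2) = |v| := Real.sqrt_sq_eq_abs v
  have h1 : (0:ℝ) ≤ Real.sqrt (u ^ 2 + v ^ 2) + v := by
    nlinarith [neg_abs_le v, hv2 ▸ hs]
  have h2 : (0:ℝ) ≤ Real.sqrt (u ^ 2 + v ^ 2) - v := by
    nlinarith [le_abs_self v, hv2 ▸ hs]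
  have hσ2 : σ ^ 2 = Real.sqrt (u ^ 2 + v ^ 2) + v := by
    rw [hσ, Real.sq_sqrt h1]
  have hθ2 : θ ^ 2 = Real.sqrt (u ^ 2 + v ^ 2) - v := by
    rw [hθ, mul_pow, Real.sq_sqrt h2]
    split <;> ring
  have hσθ : σ * θ = u := by
    rw [hσ, hθ]
    have key : Real.sqrt (Real.sqrt (u ^ 2 + v ^ 2) + v) *
        Real.sqrt (Real.sqrt (u ^ 2 + v ^ 2) - v) = |u| := by
      rw [← Real.sqrt_mul h1]
      have hq : (Real.sqrt (u ^ 2 + v ^ 2) + v) * (Real.sqrt (u ^ 2 + v ^ 2) - v)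
          = u ^ 2 := by
        have := Real.sq_sqrt (by positivity : (0:ℝ) ≤ u ^ 2 + v ^ 2)
        nlinarith [this]
      rw [hq, Real.sqrt_sq_eq_abs]
    split
    · next h => rw [abs_of_neg h] at key; linear_combination -key
    · next h => rw [abs_of_nonneg (not_lt.1 h)] at key; linear_combination key
  have hdiff : σ ^ 2 - θ ^ 2 = 2 * v := by rw [hσ2, hθ2]; ring
  have hT2 : T = !![b1^2 - b2^2 - b3^2 + e1^2 - e2^2 - e3^2, 2*b1*b2 + 2*e1*e2, 2*b1*b3 + 2*e1*e3, 2*e2*b3 - 2*e3*b2;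
      2*b1*b2 + 2*e1*e2, -b1^2 + b2^2 - b3^2 - e1^2 + e2^2 - e3^2, 2*b2*b3 + 2*e2*e3, 2*e3*b1 - 2*e1*b3;
      2*b1*b3 + 2*e1*e3, 2*b2*b3 + 2*e2*e3, -b1^2 - b2^2 + b3^2 - e1^2 - e2^2 + e3^2, 2*e1*b2 - 2*e2*b1;
      2*e3*b2 - 2*e2*b3, 2*e1*b3 - 2*e3*b1, 2*e2*b1 - 2*e1*b2, b1^2 + b2^2 + b3^2 + e1^2 + e2^2 + e3^2] := by
    rw [hT, hF, hFt, pow_two, pow_two]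
    ext i j
    fin_cases i <;> fin_cases j <;>
      simp [Matrix.mul_apply, Fin.sum_univ_succ] <;> ring
  rw [hdiff, show 2 * σ * θ = 2 * u by rw [mul_assoc, hσθ], hT2, hF, hFt, hu, hv]
  ext i j
  fin_cases i <;> fin_cases j <;>
    simp [Matrix.mul_apply, Fin.sum_univ_succ] <;> ring
end

section
/- F̃·T = 2σθ·F − (σ² − θ²)·F̃, where T = F² + F̃². -/
theorem mul_fin_four' {α : Type*} [NonUnitalNonAssocSemiring α]
    (a₁₁ a₁₂ a₁₃ a₁₄ a₂₁ a₂₂ a₂₃ a₂₄ a₃₁ a₃₂ a₃₃ a₃₄ a₄₁ a₄₂ a₄₃ a₄₄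
     b₁₁ b₁₂ b₁₃ b₁₄ b₂₁ b₂₂ b₂₃ b₂₄ b₃₁ b₃₂ b₃₃ b₃₄ b₄₁ b₄₂ b₄₃ b₄₄ : α) :
    !![a₁₁, a₁₂, a₁₃, a₁₄; a₂₁, a₂₂, a₂₃, a₂₄; a₃₁, a₃₂, a₃₃, a₃₄; a₄₁, a₄₂, a₄₃, a₄₄] *
      !![b₁₁, b₁₂, b₁₃, b₁₄; b₂₁, b₂₂, b₂₃, b₂₄; b₃₁, b₃₂, b₃₃, b₃₄; b₄₁, b₄₂, b₄₃, b₄₄] =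
    !![a₁₁*b₁₁ + a₁₂*b₂₁ + a₁₃*b₃₁ + a₁₄*b₄₁, a₁₁*b₁₂ + a₁₂*b₂₂ + a₁₃*b₃₂ + a₁₄*b₄₂,
       a₁₁*b₁₃ + a₁₂*b₂₃ + a₁₃*b₃₃ + a₁₄*b₄₃, a₁₁*b₁₄ + a₁₂*b₂₄ + a₁₃*b₃₄ + a₁₄*b₄₄;
       a₂₁*b₁₁ + a₂₂*b₂₁ + a₂₃*b₃₁ + a₂₄*b₄₁, a₂₁*b₁₂ + a₂₂*b₂₂ + a₂₃*b₃₂ + a₂₄*b₄₂,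
       a₂₁*b₁₃ + a₂₂*b₂₃ + a₂₃*b₃₃ + a₂₄*b₄₃, a₂₁*b₁₄ + a₂₂*b₂₄ + a₂₃*b₃₄ + a₂₄*b₄₄;
       a₃₁*b₁₁ + a₃₂*b₂₁ + a₃₃*b₃₁ + a₃₄*b₄₁, a₃₁*b₁₂ + a₃₂*b₂₂ + a₃₃*b₃₂ + a₃₄*b₄₂,
       a₃₁*b₁₃ + a₃₂*b₂₃ + a₃₃*b₃₃ + a₃₄*b₄₃, a₃₁*b₁₄ + a₃₂*b₂₄ + a₃₃*b₃₄ + a₃₄*b₄₄;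
       a₄₁*b₁₁ + a₄₂*b₂₁ + a₄₃*b₃₁ + a₄₄*b₄₁, a₄₁*b₁₂ + a₄₂*b₂₂ + a₄₃*b₃₂ + a₄₄*b₄₂,
       a₄₁*b₁₃ + a₄₂*b₂₃ + a₄₃*b₃₃ + a₄₄*b₄₃, a₄₁*b₁₄ + a₄₂*b₂₄ + a₄₃*b₃₄ + a₄₄*b₄₄] := by
  ext i j
  fin_cases i <;> fin_cases j <;>
    simp [Matrix.mul_apply, Fin.sum_univ_four]


theorem smul_fin_four' (c : ℝ)
    (a₁₁ a₁₂ a₁₃ a₁₄ a₂₁ a₂₂ a₂₃ a₂₄ a₃₁ a₃₂ a₃₃ a₃₄ a₄₁ a₄₂ a₄₃ a₄₄ : ℝ) :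
    c • !![a₁₁, a₁₂, a₁₃, a₁₄; a₂₁, a₂₂, a₂₃, a₂₄; a₃₁, a₃₂, a₃₃, a₃₄; a₄₁, a₄₂, a₄₃, a₄₄] =
    !![c*a₁₁, c*a₁₂, c*a₁₃, c*a₁₄; c*a₂₁, c*a₂₂, c*a₂₃, c*a₂₄;
       c*a₃₁, c*a₃₂, c*a₃₃, c*a₃₄; c*a₄₁, c*a₄₂, c*a₄₃, c*a₄₄] := by
  ext i j
  fin_cases i <;> fin_cases j <;> simp

theorem add_fin_four' {α : Type*} [Add α]
    (a₁₁ a₁₂ a₁₃ a₁₄ a₂₁ a₂₂ a₂₃ a₂₄ a₃₁ a₃₂ a₃₃ a₃₄ a₄₁ a₄₂ a₄₃ a₄₄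
     b₁₁ b₁₂ b₁₃ b₁₄ b₂₁ b₂₂ b₂₃ b₂₄ b₃₁ b₃₂ b₃₃ b₃₄ b₄₁ b₄₂ b₄₃ b₄₄ : α) :
    !![a₁₁, a₁₂, a₁₃, a₁₄; a₂₁, a₂₂, a₂₃, a₂₄; a₃₁, a₃₂, a₃₃, a₃₄; a₄₁, a₄₂, a₄₃, a₄₄] +
      !![b₁₁, b₁₂, b₁₃, b₁₄; b₂₁, b₂₂, b₂₃, b₂₄; b₃₁, b₃₂, b₃₃, b₃₄; b₄₁, b₄₂, b₄₃, b₄₄] =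
    !![a₁₁+b₁₁, a₁₂+b₁₂, a₁₃+b₁₃, a₁₄+b₁₄; a₂₁+b₂₁, a₂₂+b₂₂, a₂₃+b₂₃, a₂₄+b₂₄;
       a₃₁+b₃₁, a₃₂+b₃₂, a₃₃+b₃₃, a₃₄+b₃₄; a₄₁+b₄₁, a₄₂+b₄₂, a₄₃+b₄₃, a₄₄+b₄₄] := by
  ext i j
  fin_cases i <;> fin_cases j <;> simp

theorem sub_fin_four' {α : Type*} [Sub α]
    (a₁₁ a₁₂ a₁₃ a₁₄ a₂₁ a₂₂ a₂₃ a₂₄ a₃₁ a₃₂ a₃₃ a₃₄ a₄₁ a₄₂ a₄₃ a₄₄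
     b₁₁ b₁₂ b₁₃ b₁₄ b₂₁ b₂₂ b₂₃ b₂₄ b₃₁ b₃₂ b₃₃ b₃₄ b₄₁ b₄₂ b₄₃ b₄₄ : α) :
    !![a₁₁, a₁₂, a₁₃, a₁₄; a₂₁, a₂₂, a₂₃, a₂₄; a₃₁, a₃₂, a₃₃, a₃₄; a₄₁, a₄₂, a₄₃, a₄₄] -
      !![b₁₁, b₁₂, b₁₃, b₁₄; b₂₁, b₂₂, b₂₃, b₂₄; b₃₁, b₃₂, b₃₃, b₃₄; b₄₁, b₄₂, b₄₃, b₄₄] =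
    !![a₁₁-b₁₁, a₁₂-b₁₂, a₁₃-b₁₃, a₁₄-b₁₄; a₂₁-b₂₁, a₂₂-b₂₂, a₂₃-b₂₃, a₂₄-b₂₄;
       a₃₁-b₃₁, a₃₂-b₃₂, a₃₃-b₃₃, a₃₄-b₃₄; a₄₁-b₄₁, a₄₂-b₄₂, a₄₃-b₄₃, a₄₄-b₄₄] := by
  ext i j
  fin_cases i <;> fin_cases j <;> simp [Matrix.sub_apply]

theorem eq_fin_four' {α : Type*}
    {a₁₁ a₁₂ a₁₃ a₁₄ a₂₁ a₂₂ a₂₃ a₂₄ a₃₁ a₃₂ a₃₃ a₃₄ a₄₁ a₄₂ a₄₃ a₄₄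
     b₁₁ b₁₂ b₁₃ b₁₄ b₂₁ b₂₂ b₂₃ b₂₄ b₃₁ b₃₂ b₃₃ b₃₄ b₄₁ b₄₂ b₄₃ b₄₄ : α}
    (h₁₁ : a₁₁ = b₁₁) (h₁₂ : a₁₂ = b₁₂) (h₁₃ : a₁₃ = b₁₃) (h₁₄ : a₁₄ = b₁₄)
    (h₂₁ : a₂₁ = b₂₁) (h₂₂ : a₂₂ = b₂₂) (h₂₃ : a₂₃ = b₂₃) (h₂₄ : a₂₄ = b₂₄)
    (h₃₁ : a₃₁ = b₃₁) (h₃₂ : a₃₂ = b₃₂) (h₃₃ : a₃₃ = b₃₃) (h₃₄ : a₃₄ = b₃₄)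
    (h₄₁ : a₄₁ = b₄₁) (h₄₂ : a₄₂ = b₄₂) (h₄₃ : a₄₃ = b₄₃) (h₄₄ : a₄₄ = b₄₄) :
    !![a₁₁, a₁₂, a₁₃, a₁₄; a₂₁, a₂₂, a₂₃, a₂₄; a₃₁, a₃₂, a₃₃, a₃₄; a₄₁, a₄₂, a₄₃, a₄₄] =
    !![b₁₁, b₁₂, b₁₃, b₁₄; b₂₁, b₂₂, b₂₃, b₂₄; b₃₁, b₃₂, b₃₃, b₃₄; b₄₁, b₄₂, b₄₃, b₄₄] := by
  subst_vars; rfl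

set_option maxHeartbeats 1000000 in
theorem Ft_mul_T
(e1 e2 e3 b1 b2 b3 u v σ θ : ℝ)
    (hu : u = e1 * b1 + e2 * b2 + e3 * b3)
    (hv : v = ((e1 ^ 2 + e2 ^ 2 + e3 ^ 2) - (b1 ^ 2 + b2 ^ 2 + b3 ^ 2)) / 2)
    (hσ : σ = Real.sqrt (Real.sqrt (u ^ 2 + v ^ 2) + v))
    (hθ : θ = (if u < 0 then (-1 : ℝ) else 1) * Real.sqrt (Real.sqrt (u ^ 2 + v ^ 2) - v))
    (F Ft : Matrix (Fin 4) (Fin 4) ℝ)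
    (hF : F = !![0, b3, -b2, e1; -b3, 0, b1, e2; b2, -b1, 0, e3; e1, e2, e3, 0])
    (hFt : Ft = !![0, -e3, e2, b1; e3, 0, -e1, b2; -e2, e1, 0, b3; b1, b2, b3, 0])
    (T : Matrix (Fin 4) (Fin 4) ℝ) (hT : T = F ^ 2 + Ft ^ 2) :
    Ft * T = (2 * σ * θ) • F - (σ ^ 2 - θ ^ 2) • Ft := by
  have hA : |v| ≤ Real.sqrt (u ^ 2 + v ^ 2) := by
    rw [← Real.sqrt_sq_eq_abs]
    exact Real.sqrt_le_sqrt (by nlinarith [sq_nonneg u])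
  have hAp : 0 ≤ Real.sqrt (u ^ 2 + v ^ 2) + v := by
    linarith [neg_abs_le v, hA]
  have hAm : 0 ≤ Real.sqrt (u ^ 2 + v ^ 2) - v := by
    linarith [le_abs_self v, hA]
  have hσθ : σ * θ = u := by
    rw [hσ, hθ]
    have : Real.sqrt (Real.sqrt (u ^ 2 + v ^ 2) + v) *
        Real.sqrt (Real.sqrt (u ^ 2 + v ^ 2) - v) = |u| := by
      rw [← Real.sqrt_mul hAp]
      have hs : (Real.sqrt (u ^ 2 + v ^ 2) + v) * (Real.sqrt (u ^ 2 + v ^ 2) - v)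
          = u ^ 2 := by
        have := Real.sq_sqrt (by positivity : (0:ℝ) ≤ u ^ 2 + v ^ 2)
        nlinarith [this]
      rw [hs, Real.sqrt_sq_eq_abs]
    rcases lt_or_ge u 0 with h | h
    · rw [if_pos h, abs_of_neg h] at *
      linear_combination -this
    · rw [if_neg (not_lt.mpr h), abs_of_nonneg h] at *
      linear_combination this
  have hσ2 : σ ^ 2 = Real.sqrt (u ^ 2 + v ^ 2) + v := by
    rw [hσ, Real.sq_sqrt hAp]
  have hθ2 : θ ^ 2 = Real.sqrt (u ^ 2 + v ^ 2) - v := by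
    rw [hθ, mul_pow, Real.sq_sqrt hAm]
    rcases lt_or_ge u 0 with h | h <;> simp [h]
  have h2 : σ ^ 2 - θ ^ 2 = 2 * v := by rw [hσ2, hθ2]; ring
  have h1 : 2 * σ * θ = 2 * u := by rw [mul_assoc, hσθ]
  rw [h1, h2]
  subst hT hF hFt hu hv
  rw [pow_two, pow_two, mul_fin_four', mul_fin_four', Matrix.mul_add,
    mul_fin_four', mul_fin_four', add_fin_four', smul_fin_four', smul_fin_four',
    sub_fin_four']
  exact eq_fin_four' (by ring) (by ring) (by ring) (by ring) (by ring) (by ring) (by ring)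
    (by ring) (by ring) (by ring) (by ring) (by ring) (by ring) (by ring) (by ring) (by ring)
end

section
/- T² = (σ² + θ²)²·I, where T = F² + F̃² and I is the 4×4 identity matrix. -/
set_option maxHeartbeats 2000000


theorem T_sq
(e1 e2 e3 b1 b2 b3 u v σ θ : ℝ)
    (hu : u = e1 * b1 + e2 * b2 + e3 * b3)
    (hv : v = ((e1 ^ 2 + e2 ^ 2 + e3 ^ 2) - (b1 ^ 2 + b2 ^ 2 + b3 ^ 2)) / 2)
    (hσ : σ = Real.sqrt (Real.sqrt (u ^ 2 + v ^ 2) + v))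
    (hθ : θ = (if u < 0 then (-1 : ℝ) else 1) * Real.sqrt (Real.sqrt (u ^ 2 + v ^ 2) - v))
    (F Ft : Matrix (Fin 4) (Fin 4) ℝ)
    (hF : F = !![0, b3, -b2, e1; -b3, 0, b1, e2; b2, -b1, 0, e3; e1, e2, e3, 0])
    (hFt : Ft = !![0, -e3, e2, b1; e3, 0, -e1, b2; -e2, e1, 0, b3; b1, b2, b3, 0])
    (T : Matrix (Fin 4) (Fin 4) ℝ) (hT : T = F ^ 2 + Ft ^ 2) :
    T ^ 2 = ((σ ^ 2 + θ ^ 2) ^ 2) • (1 : Matrix (Fin 4) (Fin 4) ℝ) := by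
  have hroot : |v| ≤ Real.sqrt (u ^ 2 + v ^ 2) := by
    rw [← Real.sqrt_sq_eq_abs]
    exact Real.sqrt_le_sqrt (by nlinarith)
  have h1 : 0 ≤ Real.sqrt (u ^ 2 + v ^ 2) + v := by
    have := abs_le.1 hroot; linarith [this.1]
  have h2 : 0 ≤ Real.sqrt (u ^ 2 + v ^ 2) - v := by
    have := abs_le.1 hroot; linarith [this.2]
  have hσ2 : σ ^ 2 = Real.sqrt (u ^ 2 + v ^ 2) + v := by
    rw [hσ, Real.sq_sqrt h1]
  have hθ2 : θ ^ 2 = Real.sqrt (u ^ 2 + v ^ 2) - v := by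
    rw [hθ, mul_pow]
    rcases lt_or_ge u 0 with h | h <;> simp [h, Real.sq_sqrt h2]
  have hsum : (σ ^ 2 + θ ^ 2) ^ 2 = 4 * (u ^ 2 + v ^ 2) := by
    have hs : Real.sqrt (u ^ 2 + v ^ 2) ^ 2 = u ^ 2 + v ^ 2 :=
      Real.sq_sqrt (by positivity)
    rw [hσ2, hθ2]; nlinarith [hs]
  rw [hsum, hT, hF, hFt, hu, hv]
  ext i j
  fin_cases i <;> fin_cases j <;>
    simp [pow_two, Matrix.mul_apply, Fin.sum_univ_succ, Matrix.one_apply] <;> ring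
end

section
/- Generalized Euler–Rodrigues formula: if σ² + θ² > 0, then for every real t, exp(tF) = ((cosh(tσ)+cos(tθ))/2)·I + ((σ·sinh(tσ)+θ·sin(tθ))/(σ²+θ²))·F + ((θ·sinh(tσ)−σ·sin(tθ))/(σ²+θ²))·F̃ + ((cosh(tσ)−cos(tθ))/(2(σ²+θ²)))·T, where exp denotes the matrix exponential. -/
open NormedSpace in
theorem exp_eq_of_ode' {A : Type*} [NormedRing A] [NormedAlgebra ℝ A] [CompleteSpace A]
    (f : A) (X : ℝ → A) (hX : ∀ t, HasDerivAt X (f * X t) t) (h0 : X 0 = 1) (t : ℝ) :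
    exp (t • f) = X t := by
  have hG : ∀ s : ℝ, HasDerivAt (fun s : ℝ => exp (s • (-f)) * X s) 0 s := by
    intro s
    have h1 : HasDerivAt (fun s : ℝ => exp (s • (-f))) (-f * exp (s • (-f))) s :=
      hasDerivAt_exp_smul_const' (-f) s
    have h2 := h1.mul (hX s)
    have hc : exp (s • (-f)) * f = f * exp (s • (-f)) :=
      (((Commute.refl f).neg_left).smul_left s).exp_left
    convert h2 using 1
    · rfl
    rw [← mul_assoc, hc]
    noncomm_ring
  have hconst := is_const_of_deriv_eq_zero
    (f := fun s : ℝ => exp (s • (-f)) * X s)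
    (fun s => (hG s).differentiableAt) (fun s => (hG s).deriv) t 0
  simp only [zero_smul, exp_zero, one_mul, h0, mul_one] at hconst
  have hinv : exp (t • f) * exp (t • (-f)) = 1 := by
    letI : NormedAlgebra ℚ A := .restrictScalars ℚ ℝ A
    rw [← exp_add_of_commute (((Commute.refl f).neg_right).smul_left t |>.smul_right t)]
    simp
  calc exp (t • f) = exp (t • f) * (exp (t • (-f)) * X t) := by rw [hconst, mul_one]
    _ = (exp (t • f) * exp (t • (-f))) * X t := by rw [mul_assoc]
    _ = X t := by rw [hinv, one_mul]

set_option maxHeartbeats 2000000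

theorem euler_rodrigues
(e1 e2 e3 b1 b2 b3 u v σ θ : ℝ)
    (hu : u = e1 * b1 + e2 * b2 + e3 * b3)
    (hv : v = ((e1 ^ 2 + e2 ^ 2 + e3 ^ 2) - (b1 ^ 2 + b2 ^ 2 + b3 ^ 2)) / 2)
    (hσ : σ = Real.sqrt (Real.sqrt (u ^ 2 + v ^ 2) + v))
    (hθ : θ = (if u < 0 then (-1 : ℝ) else 1) * Real.sqrt (Real.sqrt (u ^ 2 + v ^ 2) - v))
    (F Ft : Matrix (Fin 4) (Fin 4) ℝ)
    (hF : F = !![0, b3, -b2, e1; -b3, 0, b1, e2; b2, -b1, 0, e3; e1, e2, e3, 0])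
    (hFt : Ft = !![0, -e3, e2, b1; e3, 0, -e1, b2; -e2, e1, 0, b3; b1, b2, b3, 0])
    (T : Matrix (Fin 4) (Fin 4) ℝ) (hT : T = F ^ 2 + Ft ^ 2)
    (hpos : σ ^ 2 + θ ^ 2 > 0) :
    ∀ t : ℝ, NormedSpace.exp (t • F) =
      ((Real.cosh (t * σ) + Real.cos (t * θ)) / 2) • (1 : Matrix (Fin 4) (Fin 4) ℝ)
      + ((σ * Real.sinh (t * σ) + θ * Real.sin (t * θ)) / (σ ^ 2 + θ ^ 2)) • F
      + ((θ * Real.sinh (t * σ) - σ * Real.sin (t * θ)) / (σ ^ 2 + θ ^ 2)) • Ft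
      + ((Real.cosh (t * σ) - Real.cos (t * θ)) / (2 * (σ ^ 2 + θ ^ 2))) • T := by
  intro t
  letI : SeminormedRing (Matrix (Fin 4) (Fin 4) ℝ) := Matrix.linftyOpSemiNormedRing
  letI : NormedRing (Matrix (Fin 4) (Fin 4) ℝ) := Matrix.linftyOpNormedRing
  letI : NormedAlgebra ℝ (Matrix (Fin 4) (Fin 4) ℝ) := Matrix.linftyOpNormedAlgebra
  -- basic scalar facts
  have hr2 : Real.sqrt (u ^ 2 + v ^ 2) ^ 2 = u ^ 2 + v ^ 2 :=
    Real.sq_sqrt (by positivity)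
  have habs : |v| ≤ Real.sqrt (u ^ 2 + v ^ 2) := by
    rw [← Real.sqrt_sq_eq_abs]
    exact Real.sqrt_le_sqrt (by nlinarith [sq_nonneg u])
  have hplus : 0 ≤ Real.sqrt (u ^ 2 + v ^ 2) + v := by
    have := abs_le.mp habs; linarith [this.1]
  have hminus : 0 ≤ Real.sqrt (u ^ 2 + v ^ 2) - v := by
    have := abs_le.mp habs; linarith [this.2]
  have hσ2 : σ ^ 2 = Real.sqrt (u ^ 2 + v ^ 2) + v := by
    rw [hσ]; exact Real.sq_sqrt hplus
  have hθ2 : θ ^ 2 = Real.sqrt (u ^ 2 + v ^ 2) - v := by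
    rw [hθ, mul_pow]
    rcases lt_or_ge u 0 with h | h
    · simp [if_pos h, Real.sq_sqrt hminus]
    · simp [if_neg (not_lt.mpr h), Real.sq_sqrt hminus]
  have hv' : v = (σ ^ 2 - θ ^ 2) / 2 := by rw [hσ2, hθ2]; ring
  have hu' : u = σ * θ := by
    have hmul : Real.sqrt (Real.sqrt (u ^ 2 + v ^ 2) + v) *
        Real.sqrt (Real.sqrt (u ^ 2 + v ^ 2) - v) = |u| := by
      rw [← Real.sqrt_mul hplus]
      have : (Real.sqrt (u ^ 2 + v ^ 2) + v) * (Real.sqrt (u ^ 2 + v ^ 2) - v) = u ^ 2 := by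
        nlinarith [hr2]
      rw [this, Real.sqrt_sq_eq_abs]
    rw [hσ, hθ]
    rcases lt_or_ge u 0 with h | h
    · simp only [if_pos h]
      rw [mul_comm (-1 : ℝ), ← mul_assoc, hmul, abs_of_neg h]; ring
    · simp only [if_neg (not_lt.mpr h)]
      rw [mul_comm (1 : ℝ), ← mul_assoc, hmul, abs_of_nonneg h]; ring
  have hs : σ ^ 2 + θ ^ 2 ≠ 0 := ne_of_gt hpos
  have hs2 : (2 : ℝ) * (σ ^ 2 + θ ^ 2) ≠ 0 := by positivity
  have hs3 : σ ^ 2 * 2 + θ ^ 2 * 2 ≠ 0 := by intro h; exact hs (by linarith)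
  -- matrix identities
  have hFFt : F * Ft = u • (1 : Matrix (Fin 4) (Fin 4) ℝ) := by
    subst hF hFt hu
    ext i j
    fin_cases i <;> fin_cases j <;>
      simp [Matrix.mul_apply, Fin.sum_univ_four, Matrix.one_apply] <;> ring
  have hFt2 : Ft * Ft = F * F - (2 * v) • (1 : Matrix (Fin 4) (Fin 4) ℝ) := by
    subst hF hFt hv
    ext i j
    fin_cases i <;> fin_cases j <;>
      simp [Matrix.mul_apply, Fin.sum_univ_four, Matrix.one_apply] <;> ring
  have hFF : F * F = (2⁻¹ : ℝ) • T + v • (1 : Matrix (Fin 4) (Fin 4) ℝ) := by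
    rw [hT, pow_two, pow_two, hFt2]
    module
  have hFT : F * T = (2 * u) • Ft + (2 * v) • F := by
    have h4 : F * T = (2⁻¹ : ℝ) • (F * T) + v • F + u • Ft := by
      nth_rewrite 1 [hT]
      rw [pow_two, pow_two, hFF, mul_add, mul_add, mul_smul_comm, mul_smul_comm, mul_one,
        ← mul_assoc, hFFt, Matrix.smul_mul, Matrix.one_mul]
    linear_combination (norm := module) (2 : ℝ) • h4
  -- the candidate solution
  set X : ℝ → Matrix (Fin 4) (Fin 4) ℝ := fun t =>
      ((Real.cosh (t * σ) + Real.cos (t * θ)) / 2) • (1 : Matrix (Fin 4) (Fin 4) ℝ)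
      + ((σ * Real.sinh (t * σ) + θ * Real.sin (t * θ)) / (σ ^ 2 + θ ^ 2)) • F
      + ((θ * Real.sinh (t * σ) - σ * Real.sin (t * θ)) / (σ ^ 2 + θ ^ 2)) • Ft
      + ((Real.cosh (t * σ) - Real.cos (t * θ)) / (2 * (σ ^ 2 + θ ^ 2))) • T with hX
  have h0 : X 0 = 1 := by
    simp only [hX, zero_mul, Real.cosh_zero, Real.cos_zero, Real.sinh_zero, Real.sin_zero,
      mul_zero, add_zero, sub_self, zero_div, zero_smul, zero_add]
    norm_num
  have hderiv : ∀ t : ℝ, HasDerivAt X (F * X t) t := by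
    intro t
    have hts : HasDerivAt (fun t : ℝ => t * σ) σ t := hasDerivAt_mul_const σ
    have htt : HasDerivAt (fun t : ℝ => t * θ) θ t := hasDerivAt_mul_const θ
    have ha : HasDerivAt (fun t : ℝ => (Real.cosh (t * σ) + Real.cos (t * θ)) / 2)
        ((Real.sinh (t * σ) * σ + -Real.sin (t * θ) * θ) / 2) t :=
      ((hts.cosh.add htt.cos)).div_const 2
    have hb : HasDerivAt (fun t : ℝ => (σ * Real.sinh (t * σ) + θ * Real.sin (t * θ)) /
        (σ ^ 2 + θ ^ 2))
        ((σ * (Real.cosh (t * σ) * σ) + θ * (Real.cos (t * θ) * θ)) / (σ ^ 2 + θ ^ 2)) t :=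
      (((hts.sinh.const_mul σ).add (htt.sin.const_mul θ))).div_const _
    have hc : HasDerivAt (fun t : ℝ => (θ * Real.sinh (t * σ) - σ * Real.sin (t * θ)) /
        (σ ^ 2 + θ ^ 2))
        ((θ * (Real.cosh (t * σ) * σ) - σ * (Real.cos (t * θ) * θ)) / (σ ^ 2 + θ ^ 2)) t :=
      (((hts.sinh.const_mul θ).sub (htt.sin.const_mul σ))).div_const _
    have hd : HasDerivAt (fun t : ℝ => (Real.cosh (t * σ) - Real.cos (t * θ)) /
        (2 * (σ ^ 2 + θ ^ 2)))
        ((Real.sinh (t * σ) * σ - -Real.sin (t * θ) * θ) / (2 * (σ ^ 2 + θ ^ 2))) t :=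
      ((hts.cosh.sub htt.cos)).div_const _
    have hD := (((ha.smul_const (1 : Matrix (Fin 4) (Fin 4) ℝ)).add
      (hb.smul_const F)).add (hc.smul_const Ft)).add (hd.smul_const T)
    have key : F * X t =
        ((Real.sinh (t * σ) * σ + -Real.sin (t * θ) * θ) / 2) • (1 : Matrix (Fin 4) (Fin 4) ℝ)
        + ((σ * (Real.cosh (t * σ) * σ) + θ * (Real.cos (t * θ) * θ)) / (σ ^ 2 + θ ^ 2)) • F
        + ((θ * (Real.cosh (t * σ) * σ) - σ * (Real.cos (t * θ) * θ)) / (σ ^ 2 + θ ^ 2)) • Ft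
        + ((Real.sinh (t * σ) * σ - -Real.sin (t * θ) * θ) / (2 * (σ ^ 2 + θ ^ 2))) • T := by
      rw [hX]
      simp only [mul_add, mul_smul_comm, mul_one]
      rw [hFF, hFFt, hFT, hu', hv']
      generalize Real.cosh (t * σ) = ch
      generalize Real.sinh (t * σ) = sh
      generalize Real.cos (t * θ) = co
      generalize Real.sin (t * θ) = sn
      have hinv : (σ ^ 2 * 2 + θ ^ 2 * 2) * (σ ^ 2 * 2 + θ ^ 2 * 2)⁻¹ = 1 :=
        mul_inv_cancel₀ hs3
      match_scalars
      all_goals try ring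
      all_goals field_simp [hs, hs3]
      all_goals first | ring1 | (left; ring1)
    rw [key, hX]
    exact hD
  exact (exp_eq_of_ode' F X hderiv h0 t).trans (by rw [hX])
end

section
/- Generalized Euler–Rodrigues formula (second form): if σ² + θ² > 0, then for every real t, exp(tF) = ((θ²·cosh(tσ)+σ²·cos(tθ))/(σ²+θ²))·I + ((σ·sinh(tσ)+θ·sin(tθ))/(σ²+θ²))·F + ((θ·sinh(tσ)−σ·sin(tθ))/(σ²+θ²))·F̃ + ((cosh(tσ)−cos(tθ))/(σ²+θ²))·F², where exp denotes the matrix exponential. -/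
set_option maxHeartbeats 2000000
theorem euler_rodrigues_second
(e1 e2 e3 b1 b2 b3 u v σ θ : ℝ)
    (hu : u = e1 * b1 + e2 * b2 + e3 * b3)
    (hv : v = ((e1 ^ 2 + e2 ^ 2 + e3 ^ 2) - (b1 ^ 2 + b2 ^ 2 + b3 ^ 2)) / 2)
    (hσ : σ = Real.sqrt (Real.sqrt (u ^ 2 + v ^ 2) + v))
    (hθ : θ = (if u < 0 then (-1 : ℝ) else 1) * Real.sqrt (Real.sqrt (u ^ 2 + v ^ 2) - v))
    (F Ft : Matrix (Fin 4) (Fin 4) ℝ)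
    (hF : F = !![0, b3, -b2, e1; -b3, 0, b1, e2; b2, -b1, 0, e3; e1, e2, e3, 0])
    (hFt : Ft = !![0, -e3, e2, b1; e3, 0, -e1, b2; -e2, e1, 0, b3; b1, b2, b3, 0])
    (hpos : σ ^ 2 + θ ^ 2 > 0) :
    ∀ t : ℝ, NormedSpace.exp (t • F) =
      ((θ ^ 2 * Real.cosh (t * σ) + σ ^ 2 * Real.cos (t * θ)) / (σ ^ 2 + θ ^ 2)) • (1 : Matrix (Fin 4) (Fin 4) ℝ)
      + ((σ * Real.sinh (t * σ) + θ * Real.sin (t * θ)) / (σ ^ 2 + θ ^ 2)) • F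
      + ((θ * Real.sinh (t * σ) - σ * Real.sin (t * θ)) / (σ ^ 2 + θ ^ 2)) • Ft
      + ((Real.cosh (t * σ) - Real.cos (t * θ)) / (σ ^ 2 + θ ^ 2)) • (F ^ 2) := by
  have hS : σ ^ 2 + θ ^ 2 ≠ 0 := ne_of_gt hpos
  -- basic facts about σ, θ
  have hr2 : Real.sqrt (u ^ 2 + v ^ 2) ^ 2 = u ^ 2 + v ^ 2 :=
    Real.sq_sqrt (by positivity)
  have hrv : |v| ≤ Real.sqrt (u ^ 2 + v ^ 2) := by
    rw [← Real.sqrt_sq_eq_abs]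
    exact Real.sqrt_le_sqrt (by nlinarith)
  obtain ⟨hv1, hv2⟩ := abs_le.mp hrv
  have h1 : (0:ℝ) ≤ Real.sqrt (u ^ 2 + v ^ 2) + v := by linarith
  have h2 : (0:ℝ) ≤ Real.sqrt (u ^ 2 + v ^ 2) - v := by linarith
  have hσ2 : σ ^ 2 = Real.sqrt (u ^ 2 + v ^ 2) + v := by rw [hσ]; exact Real.sq_sqrt h1
  have hθ2 : θ ^ 2 = Real.sqrt (u ^ 2 + v ^ 2) - v := by
    rw [hθ, mul_pow]
    split_ifs <;> rw [Real.sq_sqrt h2] <;> ring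
  have hσθ : σ * θ = u := by
    have key : Real.sqrt (Real.sqrt (u ^ 2 + v ^ 2) + v) *
        Real.sqrt (Real.sqrt (u ^ 2 + v ^ 2) - v) = |u| := by
      rw [← Real.sqrt_mul h1]
      have : (Real.sqrt (u ^ 2 + v ^ 2) + v) * (Real.sqrt (u ^ 2 + v ^ 2) - v) = u ^ 2 := by
        nlinarith [hr2]
      rw [this, Real.sqrt_sq_eq_abs]
    rw [hσ, hθ]
    split_ifs with h
    · rw [show Real.sqrt (Real.sqrt (u ^ 2 + v ^ 2) + v) *
        (-1 * Real.sqrt (Real.sqrt (u ^ 2 + v ^ 2) - v)) =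
        -(Real.sqrt (Real.sqrt (u ^ 2 + v ^ 2) + v) *
          Real.sqrt (Real.sqrt (u ^ 2 + v ^ 2) - v)) by ring, key, abs_of_neg h, neg_neg]
    · rw [show Real.sqrt (Real.sqrt (u ^ 2 + v ^ 2) + v) *
        (1 * Real.sqrt (Real.sqrt (u ^ 2 + v ^ 2) - v)) =
        Real.sqrt (Real.sqrt (u ^ 2 + v ^ 2) + v) *
          Real.sqrt (Real.sqrt (u ^ 2 + v ^ 2) - v) by ring, key,
        abs_of_nonneg (not_lt.mp h)]
  have h2v : σ ^ 2 - θ ^ 2 = 2 * v := by rw [hσ2, hθ2]; ring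
  -- matrix identities
  have hFFt : F * Ft = (σ * θ) • (1 : Matrix (Fin 4) (Fin 4) ℝ) := by
    rw [hσθ, hu, hF, hFt]
    ext i j
    fin_cases i <;> fin_cases j <;>
      simp [Matrix.mul_apply, Fin.sum_univ_four, Matrix.one_apply] <;> ring
  have hF3 : F * F ^ 2 = (σ ^ 2 - θ ^ 2) • F + (σ * θ) • Ft := by
    rw [h2v, hσθ, hu, hv, hF, hFt, pow_two]
    ext i j
    fin_cases i <;> fin_cases j <;>
      simp [Matrix.mul_apply, Fin.sum_univ_four] <;> ring
  have hFF : F * F = F ^ 2 := (sq F).symm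
  intro t
  letI : SeminormedRing (Matrix (Fin 4) (Fin 4) ℝ) := Matrix.linftyOpSemiNormedRing
  letI : NormedRing (Matrix (Fin 4) (Fin 4) ℝ) := Matrix.linftyOpNormedRing
  letI : NormedAlgebra ℝ (Matrix (Fin 4) (Fin 4) ℝ) := Matrix.linftyOpNormedAlgebra
  set g : ℝ → Matrix (Fin 4) (Fin 4) ℝ := fun s =>
      ((θ ^ 2 * Real.cosh (s * σ) + σ ^ 2 * Real.cos (s * θ)) / (σ ^ 2 + θ ^ 2)) • (1 : Matrix (Fin 4) (Fin 4) ℝ)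
      + ((σ * Real.sinh (s * σ) + θ * Real.sin (s * θ)) / (σ ^ 2 + θ ^ 2)) • F
      + ((θ * Real.sinh (s * σ) - σ * Real.sin (s * θ)) / (σ ^ 2 + θ ^ 2)) • Ft
      + ((Real.cosh (s * σ) - Real.cos (s * θ)) / (σ ^ 2 + θ ^ 2)) • (F ^ 2) with hgdef
  have hgd : ∀ s, HasDerivAt g (F * g s) s := by
    intro s
    have hch : HasDerivAt (fun s : ℝ => Real.cosh (s * σ)) (Real.sinh (s * σ) * σ) s :=
      (hasDerivAt_mul_const σ).cosh
    have hsh : HasDerivAt (fun s : ℝ => Real.sinh (s * σ)) (Real.cosh (s * σ) * σ) s :=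
      (hasDerivAt_mul_const σ).sinh
    have hc : HasDerivAt (fun s : ℝ => Real.cos (s * θ)) (-Real.sin (s * θ) * θ) s :=
      (hasDerivAt_mul_const θ).cos
    have hs : HasDerivAt (fun s : ℝ => Real.sin (s * θ)) (Real.cos (s * θ) * θ) s :=
      (hasDerivAt_mul_const θ).sin
    have h0 := (((hch.const_mul (θ ^ 2)).add (hc.const_mul (σ ^ 2))).div_const (σ ^ 2 + θ ^ 2))
    have h1 := (((hsh.const_mul σ).add (hs.const_mul θ)).div_const (σ ^ 2 + θ ^ 2))
    have h2 := (((hsh.const_mul θ).sub (hs.const_mul σ)).div_const (σ ^ 2 + θ ^ 2))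
    have h3 := ((hch.sub hc).div_const (σ ^ 2 + θ ^ 2))
    have H := (((h0.smul_const (1 : Matrix (Fin 4) (Fin 4) ℝ)).add (h1.smul_const F)).add
        (h2.smul_const Ft)).add (h3.smul_const (F ^ 2))
    rw [hgdef]
    refine H.congr_deriv ?_
    simp only [mul_add, Matrix.mul_smul, mul_one, hFFt, hF3, hFF]
    match_scalars <;> field_simp <;> ring
  have hE : ∀ s : ℝ, HasDerivAt (fun s : ℝ => NormedSpace.exp (s • (-F)))
      (NormedSpace.exp (s • (-F)) * (-F)) s := fun s => hasDerivAt_exp_smul_const (-F) s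
  have hH : ∀ s : ℝ, HasDerivAt (fun s => NormedSpace.exp (s • (-F)) * g s) 0 s := by
    intro s
    have := (hE s).mul (hgd s)
    have hz : NormedSpace.exp (s • (-F)) * (-F) * g s
        + NormedSpace.exp (s • (-F)) * (F * g s) = 0 := by
      rw [mul_assoc, neg_mul, mul_neg, neg_add_cancel]
    rwa [hz] at this
  have hconst := is_const_of_deriv_eq_zero
    (fun s => ((hH s).differentiableAt : DifferentiableAt ℝ _ s))
    (fun s => (hH s).deriv)
  have h0 : NormedSpace.exp ((0:ℝ) • (-F)) * g 0 = 1 := by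
    rw [hgdef]
    simp only [zero_smul, NormedSpace.exp_zero, one_mul, zero_mul, Real.cosh_zero,
      Real.cos_zero, Real.sinh_zero, Real.sin_zero, mul_zero, mul_one, add_zero, sub_self,
      zero_div, zero_smul]
    rw [show (θ ^ 2 + σ ^ 2) / (σ ^ 2 + θ ^ 2) = 1 by rw [div_eq_one_iff_eq hS]; ring,
      one_smul]
  have hkey : NormedSpace.exp (t • (-F)) * g t = 1 := (hconst t 0).trans h0
  have hprod : NormedSpace.exp (t • F) * NormedSpace.exp (t • (-F)) = 1 := by
    rw [← Matrix.exp_add_of_commute (t • F) (t • (-F)) (by simp [smul_neg] : Commute (t • F) (t • (-F)))]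
    simp [smul_neg, NormedSpace.exp_zero]
  calc NormedSpace.exp (t • F)
      = NormedSpace.exp (t • F) * (NormedSpace.exp (t • (-F)) * g t) := by
        rw [hkey, mul_one]
    _ = (NormedSpace.exp (t • F) * NormedSpace.exp (t • (-F))) * g t := by
        rw [mul_assoc]
    _ = g t := by rw [hprod, one_mul]
end

section
/- If σ = 0 and θ = 0 (equivalently u = 0 and v = 0, i.e. e·b = 0 and |e| = |b|), then for every real t, exp(tF) = I + t·F + (t²/2)·F², where exp denotes the matrix exponential. -/
set_option maxHeartbeats 1000000 in
theorem exp_tF_nilpotent_case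
    (e1 e2 e3 b1 b2 b3 u v σ θ : ℝ)
    (hu : u = e1 * b1 + e2 * b2 + e3 * b3)
    (hv : v = ((e1 ^ 2 + e2 ^ 2 + e3 ^ 2) - (b1 ^ 2 + b2 ^ 2 + b3 ^ 2)) / 2)
    (hσ : σ = Real.sqrt (Real.sqrt (u ^ 2 + v ^ 2) + v))
    (hθ : θ = (if u < 0 then (-1 : ℝ) else 1) * Real.sqrt (Real.sqrt (u ^ 2 + v ^ 2) - v))
    (F : Matrix (Fin 4) (Fin 4) ℝ)
    (hF : F = !![0, b3, -b2, e1; -b3, 0, b1, e2; b2, -b1, 0, e3; e1, e2, e3, 0])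
    (hσ0 : σ = 0) (hθ0 : θ = 0) :
    ∀ t : ℝ, NormedSpace.exp (t • F) =
      1 + t • F + (t ^ 2 / 2) • (F ^ 2) := by
  -- Step 1: u = 0 and v = 0
  have h1 : Real.sqrt (Real.sqrt (u ^ 2 + v ^ 2) + v) = 0 := by rw [← hσ]; exact hσ0
  have h2 : Real.sqrt (Real.sqrt (u ^ 2 + v ^ 2) - v) = 0 := by
    rcases lt_or_ge u 0 with h | h
    · have := hθ0; rw [hθ, if_pos h] at this; linarith
    · have := hθ0; rw [hθ, if_neg (not_lt.mpr h)] at this; linarith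
  have h1' : Real.sqrt (u ^ 2 + v ^ 2) + v ≤ 0 := Real.sqrt_eq_zero'.mp h1
  have h2' : Real.sqrt (u ^ 2 + v ^ 2) - v ≤ 0 := Real.sqrt_eq_zero'.mp h2
  have hs : Real.sqrt (u ^ 2 + v ^ 2) = 0 := le_antisymm (by linarith) (Real.sqrt_nonneg _)
  have huv : u ^ 2 + v ^ 2 ≤ 0 := Real.sqrt_eq_zero'.mp hs
  have hu0 : u = 0 := by nlinarith [sq_nonneg u, sq_nonneg v]
  have hv0 : v = 0 := by nlinarith [sq_nonneg u, sq_nonneg v]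
  have hu0' : e1 * b1 + e2 * b2 + e3 * b3 = 0 := by rw [← hu]; exact hu0
  have hv0' : e1 ^ 2 + e2 ^ 2 + e3 ^ 2 - (b1 ^ 2 + b2 ^ 2 + b3 ^ 2) = 0 := by
    rw [hu] at hu0; rw [hv] at hv0; linarith
  -- Step 2: F ^ 3 = 0
  have hF2 : F * F = !![e1^2 - b2^2 - b3^2, b1*b2 + e1*e2, b1*b3 + e1*e3, e2*b3 - e3*b2;
      b1*b2 + e1*e2, e2^2 - b1^2 - b3^2, b2*b3 + e2*e3, e3*b1 - e1*b3;
      b1*b3 + e1*e3, b2*b3 + e2*e3, e3^2 - b1^2 - b2^2, e1*b2 - e2*b1;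
      e3*b2 - e2*b3, e1*b3 - e3*b1, e2*b1 - e1*b2, e1^2 + e2^2 + e3^2] := by
    subst hF
    ext i j
    fin_cases i <;> fin_cases j <;>
      simp [Matrix.mul_apply, Fin.sum_univ_four] <;> ring
  have key : F * F * F = (e1 ^ 2 + e2 ^ 2 + e3 ^ 2 - (b1 ^ 2 + b2 ^ 2 + b3 ^ 2)) • F
      + (e1 * b1 + e2 * b2 + e3 * b3) •
        !![0, -e3, e2, b1; e3, 0, -e1, b2; -e2, e1, 0, b3; b1, b2, b3, 0] := by
    rw [hF2]
    subst hF
    ext i j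
    fin_cases i <;> fin_cases j <;>
      simp [Matrix.mul_apply, Fin.sum_univ_four] <;> ring
  have hF3 : F ^ 3 = 0 := by
    have h3 : F ^ 3 = F * F * F := by rw [pow_succ, sq]
    rw [h3, key, hu0', hv0', zero_smul, zero_smul, add_zero]
  -- Step 3: exp
  intro t
  have htF3 : (t • F) ^ 3 = 0 := by
    rw [smul_pow, hF3, smul_zero]
  have hn : ∀ n ∉ Finset.range 3, ((n.factorial : ℝ)⁻¹) • (t • F) ^ n = 0 := by
    intro n hn
    simp only [Finset.mem_range, not_lt] at hn
    have : (t • F) ^ n = 0 := by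
      calc (t • F) ^ n = (t • F) ^ 3 * (t • F) ^ (n - 3) := by
            rw [← pow_add]; congr 1; omega
        _ = 0 := by rw [htF3, zero_mul]
    rw [this, smul_zero]
  rw [NormedSpace.exp_eq_tsum ℝ]
  beta_reduce
  rw [tsum_eq_sum hn]
  rw [Finset.sum_range_succ, Finset.sum_range_succ, Finset.sum_range_one]
  simp only [pow_zero, pow_one, Nat.factorial]
  norm_num
  rw [smul_pow, smul_smul]
  congr 1
  ring
end

section
/- If u = 0 and v = 0 (i.e. e·b = 0 and |e| = |b|), then F·T = 0, T² = 0, and F² = T/2, where T = F² + F̃². -/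
set_option maxHeartbeats 1000000 in
theorem nilpotent_case_identities
    (e1 e2 e3 b1 b2 b3 u v : ℝ)
    (hu : u = e1 * b1 + e2 * b2 + e3 * b3)
    (hv : v = ((e1 ^ 2 + e2 ^ 2 + e3 ^ 2) - (b1 ^ 2 + b2 ^ 2 + b3 ^ 2)) / 2)
    (F Ft : Matrix (Fin 4) (Fin 4) ℝ)
    (hF : F = !![0, b3, -b2, e1; -b3, 0, b1, e2; b2, -b1, 0, e3; e1, e2, e3, 0])
    (hFt : Ft = !![0, -e3, e2, b1; e3, 0, -e1, b2; -e2, e1, 0, b3; b1, b2, b3, 0])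
    (T : Matrix (Fin 4) (Fin 4) ℝ) (hT : T = F ^ 2 + Ft ^ 2)
    (hu0 : u = 0) (hv0 : v = 0) :
    F * T = 0 ∧ T ^ 2 = 0 ∧ F ^ 2 = (1 / 2 : ℝ) • T := by
  have h1 : e1 * b1 + e2 * b2 + e3 * b3 = 0 := by rw [← hu, hu0]
  have h2 : e1 ^ 2 + e2 ^ 2 + e3 ^ 2 = b1 ^ 2 + b2 ^ 2 + b3 ^ 2 := by
    have := hv0 ▸ hv; linarith
  have pAe1 : e1 * (e1 * b1 + e2 * b2 + e3 * b3) = 0 := by rw [h1]; ring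
  have pBe1 : e1 * (e1 ^ 2 + e2 ^ 2 + e3 ^ 2) = e1 * (b1 ^ 2 + b2 ^ 2 + b3 ^ 2) := by rw [h2]
  have pAe2 : e2 * (e1 * b1 + e2 * b2 + e3 * b3) = 0 := by rw [h1]; ring
  have pBe2 : e2 * (e1 ^ 2 + e2 ^ 2 + e3 ^ 2) = e2 * (b1 ^ 2 + b2 ^ 2 + b3 ^ 2) := by rw [h2]
  have pAe3 : e3 * (e1 * b1 + e2 * b2 + e3 * b3) = 0 := by rw [h1]; ring
  have pBe3 : e3 * (e1 ^ 2 + e2 ^ 2 + e3 ^ 2) = e3 * (b1 ^ 2 + b2 ^ 2 + b3 ^ 2) := by rw [h2]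
  have pAb1 : b1 * (e1 * b1 + e2 * b2 + e3 * b3) = 0 := by rw [h1]; ring
  have pBb1 : b1 * (e1 ^ 2 + e2 ^ 2 + e3 ^ 2) = b1 * (b1 ^ 2 + b2 ^ 2 + b3 ^ 2) := by rw [h2]
  have pAb2 : b2 * (e1 * b1 + e2 * b2 + e3 * b3) = 0 := by rw [h1]; ring
  have pBb2 : b2 * (e1 ^ 2 + e2 ^ 2 + e3 ^ 2) = b2 * (b1 ^ 2 + b2 ^ 2 + b3 ^ 2) := by rw [h2]
  have pAb3 : b3 * (e1 * b1 + e2 * b2 + e3 * b3) = 0 := by rw [h1]; ring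
  have pBb3 : b3 * (e1 ^ 2 + e2 ^ 2 + e3 ^ 2) = b3 * (b1 ^ 2 + b2 ^ 2 + b3 ^ 2) := by rw [h2]
  have hN : F * F = Ft * Ft := by
    subst hF hFt
    ext i j
    fin_cases i <;> fin_cases j <;>
      simp [Matrix.mul_apply, Fin.sum_univ_four] <;> linarith [h1, h2]
  have hFN : F * (F * F) = 0 := by
    subst hF
    ext i j
    fin_cases i <;> fin_cases j <;>
      simp [Matrix.mul_apply, Fin.sum_univ_four] <;>
      linarith [pAe1, pBe1, pAe2, pBe2, pAe3, pBe3, pAb1, pBb1, pAb2, pBb2, pAb3, pBb3]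
  have hT2 : T = F * F + F * F := by rw [hT, pow_two, pow_two, ← hN]
  have h4 : (F * F) * (F * F) = 0 := by rw [mul_assoc, hFN, mul_zero]
  refine ⟨?_, ?_, ?_⟩
  · rw [hT2, Matrix.mul_add, hFN, add_zero]
  · rw [pow_two, hT2, Matrix.add_mul, Matrix.mul_add, h4]
    simp
  · rw [hT2, pow_two]
    ext i j
    simp [Matrix.add_apply, Matrix.smul_apply]
    ring
end

section
/- One-parameter group property: if σ² + θ² > 0 and L(t) denotes the matrix ((cosh(tσ)+cos(tθ))/2)·I + ((σ·sinh(tσ)+θ·sin(tθ))/(σ²+θ²))·F + ((θ·sinh(tσ)−σ·sin(tθ))/(σ²+θ²))·F̃ + ((cosh(tσ)−cos(tθ))/(2(σ²+θ²)))·T, then L(t+s) = L(t)·L(s) for all real s, t. -/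
set_option maxHeartbeats 4000000 in
theorem one_param_group
(e1 e2 e3 b1 b2 b3 u v σ θ : ℝ)
    (hu : u = e1 * b1 + e2 * b2 + e3 * b3)
    (hv : v = ((e1 ^ 2 + e2 ^ 2 + e3 ^ 2) - (b1 ^ 2 + b2 ^ 2 + b3 ^ 2)) / 2)
    (hσ : σ = Real.sqrt (Real.sqrt (u ^ 2 + v ^ 2) + v))
    (hθ : θ = (if u < 0 then (-1 : ℝ) else 1) * Real.sqrt (Real.sqrt (u ^ 2 + v ^ 2) - v))
    (F Ft : Matrix (Fin 4) (Fin 4) ℝ)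
    (hF : F = !![0, b3, -b2, e1; -b3, 0, b1, e2; b2, -b1, 0, e3; e1, e2, e3, 0])
    (hFt : Ft = !![0, -e3, e2, b1; e3, 0, -e1, b2; -e2, e1, 0, b3; b1, b2, b3, 0])
    (T : Matrix (Fin 4) (Fin 4) ℝ) (hT : T = F ^ 2 + Ft ^ 2)
    (hpos : σ ^ 2 + θ ^ 2 > 0)
    (L : ℝ → Matrix (Fin 4) (Fin 4) ℝ)
    (hL : ∀ t : ℝ, L t =
      ((Real.cosh (t * σ) + Real.cos (t * θ)) / 2) • (1 : Matrix (Fin 4) (Fin 4) ℝ)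
      + ((σ * Real.sinh (t * σ) + θ * Real.sin (t * θ)) / (σ ^ 2 + θ ^ 2)) • F
      + ((θ * Real.sinh (t * σ) - σ * Real.sin (t * θ)) / (σ ^ 2 + θ ^ 2)) • Ft
      + ((Real.cosh (t * σ) - Real.cos (t * θ)) / (2 * (σ ^ 2 + θ ^ 2))) • T) :
    ∀ s t : ℝ, L (t + s) = L t * L s := by
  -- scalar relations
  have hr0 : (0:ℝ) ≤ u ^ 2 + v ^ 2 := by positivity
  have hr2 : Real.sqrt (u ^ 2 + v ^ 2) ^ 2 = u ^ 2 + v ^ 2 := Real.sq_sqrt hr0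
  have hrn : 0 ≤ Real.sqrt (u ^ 2 + v ^ 2) := Real.sqrt_nonneg _
  have hrv1 : 0 ≤ Real.sqrt (u ^ 2 + v ^ 2) + v := by nlinarith
  have hrv2 : 0 ≤ Real.sqrt (u ^ 2 + v ^ 2) - v := by nlinarith
  have hσ2 : σ ^ 2 = Real.sqrt (u ^ 2 + v ^ 2) + v := by
    rw [hσ]; exact Real.sq_sqrt hrv1
  have hif : ((if u < 0 then (-1 : ℝ) else 1)) ^ 2 = 1 := by split <;> norm_num
  have hθ2 : θ ^ 2 = Real.sqrt (u ^ 2 + v ^ 2) - v := by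
    rw [hθ, mul_pow, hif, one_mul]; exact Real.sq_sqrt hrv2
  have hsq : Real.sqrt (Real.sqrt (u ^ 2 + v ^ 2) + v) *
      Real.sqrt (Real.sqrt (u ^ 2 + v ^ 2) - v) = |u| := by
    rw [← Real.sqrt_mul hrv1]
    have h : (Real.sqrt (u ^ 2 + v ^ 2) + v) * (Real.sqrt (u ^ 2 + v ^ 2) - v) = u ^ 2 := by
      nlinarith
    rw [h, Real.sqrt_sq_eq_abs]
  have hueq : u = σ * θ := by
    rw [hσ, hθ]
    rcases lt_or_ge u 0 with h | h
    · rw [if_pos h]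
      rw [abs_of_neg h] at hsq
      linear_combination hsq
    · rw [if_neg (not_lt.mpr h)]
      rw [abs_of_nonneg h] at hsq
      linear_combination -hsq
  have hveq : v = (σ ^ 2 - θ ^ 2) / 2 := by rw [hσ2, hθ2]; ring
  -- explicit form of T
  have hTe : T = !![b1^2 - b2^2 - b3^2 + e1^2 - e2^2 - e3^2, 2*b1*b2 + 2*e1*e2, 2*b1*b3 + 2*e1*e3, 2*e2*b3 - 2*e3*b2;
      2*b1*b2 + 2*e1*e2, -b1^2 + b2^2 - b3^2 - e1^2 + e2^2 - e3^2, 2*b2*b3 + 2*e2*e3, 2*e3*b1 - 2*e1*b3;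
      2*b1*b3 + 2*e1*e3, 2*b2*b3 + 2*e2*e3, -b1^2 - b2^2 + b3^2 - e1^2 - e2^2 + e3^2, 2*e1*b2 - 2*e2*b1;
      2*e3*b2 - 2*e2*b3, 2*e1*b3 - 2*e3*b1, 2*e2*b1 - 2*e1*b2, b1^2 + b2^2 + b3^2 + e1^2 + e2^2 + e3^2] := by
    rw [hT, hF, hFt, pow_two, pow_two]
    ext i j
    fin_cases i <;> fin_cases j <;>
      simp only [Matrix.add_apply, Matrix.mul_apply, Fin.sum_univ_four, Matrix.smul_apply,
        Matrix.one_apply, Fin.isValue, Matrix.cons_val', Matrix.cons_val_zero, Matrix.cons_val_one,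
        Matrix.head_cons, Matrix.empty_val', Matrix.cons_val_fin_one, Matrix.head_fin_const,
        Matrix.cons_val_two, Matrix.cons_val_three, Matrix.tail_cons, Matrix.of_apply,
        smul_eq_mul, Fin.mk_one, Fin.mk_zero, Fin.zero_eta, Fin.reduceEq, if_true, if_false,
        Fin.ext_iff, Fin.val_zero, Fin.val_one] <;>
      norm_num <;> ring
  -- matrix algebra relations
  have M1 : F * Ft = u • (1 : Matrix (Fin 4) (Fin 4) ℝ) := by
    rw [hF, hFt, hu]
    ext i j
    fin_cases i <;> fin_cases j <;>
      simp only [Matrix.add_apply, Matrix.mul_apply, Fin.sum_univ_four, Matrix.smul_apply,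
        Matrix.one_apply, Fin.isValue, Matrix.cons_val', Matrix.cons_val_zero, Matrix.cons_val_one,
        Matrix.head_cons, Matrix.empty_val', Matrix.cons_val_fin_one, Matrix.head_fin_const,
        Matrix.cons_val_two, Matrix.cons_val_three, Matrix.tail_cons, Matrix.of_apply,
        smul_eq_mul, Fin.mk_one, Fin.mk_zero, Fin.zero_eta, Fin.reduceEq, if_true, if_false,
        Fin.ext_iff, Fin.val_zero, Fin.val_one] <;>
      norm_num <;> ring
  have M2 : Ft * F = u • (1 : Matrix (Fin 4) (Fin 4) ℝ) := by
    rw [hF, hFt, hu]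
    ext i j
    fin_cases i <;> fin_cases j <;>
      simp only [Matrix.add_apply, Matrix.mul_apply, Fin.sum_univ_four, Matrix.smul_apply,
        Matrix.one_apply, Fin.isValue, Matrix.cons_val', Matrix.cons_val_zero, Matrix.cons_val_one,
        Matrix.head_cons, Matrix.empty_val', Matrix.cons_val_fin_one, Matrix.head_fin_const,
        Matrix.cons_val_two, Matrix.cons_val_three, Matrix.tail_cons, Matrix.of_apply,
        smul_eq_mul, Fin.mk_one, Fin.mk_zero, Fin.zero_eta, Fin.reduceEq, if_true, if_false,
        Fin.ext_iff, Fin.val_zero, Fin.val_one] <;>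
      norm_num <;> ring
  have M3 : F * F = v • (1 : Matrix (Fin 4) (Fin 4) ℝ) + (2⁻¹ : ℝ) • T := by
    rw [hF, hTe, hv]
    ext i j
    fin_cases i <;> fin_cases j <;>
      simp only [Matrix.add_apply, Matrix.mul_apply, Fin.sum_univ_four, Matrix.smul_apply,
        Matrix.one_apply, Fin.isValue, Matrix.cons_val', Matrix.cons_val_zero, Matrix.cons_val_one,
        Matrix.head_cons, Matrix.empty_val', Matrix.cons_val_fin_one, Matrix.head_fin_const,
        Matrix.cons_val_two, Matrix.cons_val_three, Matrix.tail_cons, Matrix.of_apply,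
        smul_eq_mul, Fin.mk_one, Fin.mk_zero, Fin.zero_eta, Fin.reduceEq, if_true, if_false,
        Fin.ext_iff, Fin.val_zero, Fin.val_one] <;>
      norm_num <;> ring
  have M4 : Ft * Ft = (-v) • (1 : Matrix (Fin 4) (Fin 4) ℝ) + (2⁻¹ : ℝ) • T := by
    rw [hFt, hTe, hv]
    ext i j
    fin_cases i <;> fin_cases j <;>
      simp only [Matrix.add_apply, Matrix.mul_apply, Fin.sum_univ_four, Matrix.smul_apply,
        Matrix.one_apply, Fin.isValue, Matrix.cons_val', Matrix.cons_val_zero, Matrix.cons_val_one,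
        Matrix.head_cons, Matrix.empty_val', Matrix.cons_val_fin_one, Matrix.head_fin_const,
        Matrix.cons_val_two, Matrix.cons_val_three, Matrix.tail_cons, Matrix.of_apply,
        smul_eq_mul, Fin.mk_one, Fin.mk_zero, Fin.zero_eta, Fin.reduceEq, if_true, if_false,
        Fin.ext_iff, Fin.val_zero, Fin.val_one] <;>
      norm_num <;> ring
  have M5 : F * T = (2 * v) • F + (2 * u) • Ft := by
    rw [hF, hFt, hTe, hu, hv]
    ext i j
    fin_cases i <;> fin_cases j <;>
      simp only [Matrix.add_apply, Matrix.mul_apply, Fin.sum_univ_four, Matrix.smul_apply,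
        Matrix.one_apply, Fin.isValue, Matrix.cons_val', Matrix.cons_val_zero, Matrix.cons_val_one,
        Matrix.head_cons, Matrix.empty_val', Matrix.cons_val_fin_one, Matrix.head_fin_const,
        Matrix.cons_val_two, Matrix.cons_val_three, Matrix.tail_cons, Matrix.of_apply,
        smul_eq_mul, Fin.mk_one, Fin.mk_zero, Fin.zero_eta, Fin.reduceEq, if_true, if_false,
        Fin.ext_iff, Fin.val_zero, Fin.val_one] <;>
      norm_num <;> ring
  have M6 : T * F = (2 * v) • F + (2 * u) • Ft := by
    rw [hF, hFt, hTe, hu, hv]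
    ext i j
    fin_cases i <;> fin_cases j <;>
      simp only [Matrix.add_apply, Matrix.mul_apply, Fin.sum_univ_four, Matrix.smul_apply,
        Matrix.one_apply, Fin.isValue, Matrix.cons_val', Matrix.cons_val_zero, Matrix.cons_val_one,
        Matrix.head_cons, Matrix.empty_val', Matrix.cons_val_fin_one, Matrix.head_fin_const,
        Matrix.cons_val_two, Matrix.cons_val_three, Matrix.tail_cons, Matrix.of_apply,
        smul_eq_mul, Fin.mk_one, Fin.mk_zero, Fin.zero_eta, Fin.reduceEq, if_true, if_false,
        Fin.ext_iff, Fin.val_zero, Fin.val_one] <;>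
      norm_num <;> ring
  have M7 : Ft * T = (2 * u) • F + (-(2 * v)) • Ft := by
    rw [hF, hFt, hTe, hu, hv]
    ext i j
    fin_cases i <;> fin_cases j <;>
      simp only [Matrix.add_apply, Matrix.mul_apply, Fin.sum_univ_four, Matrix.smul_apply,
        Matrix.one_apply, Fin.isValue, Matrix.cons_val', Matrix.cons_val_zero, Matrix.cons_val_one,
        Matrix.head_cons, Matrix.empty_val', Matrix.cons_val_fin_one, Matrix.head_fin_const,
        Matrix.cons_val_two, Matrix.cons_val_three, Matrix.tail_cons, Matrix.of_apply,
        smul_eq_mul, Fin.mk_one, Fin.mk_zero, Fin.zero_eta, Fin.reduceEq, if_true, if_false,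
        Fin.ext_iff, Fin.val_zero, Fin.val_one] <;>
      norm_num <;> ring
  have M8 : T * Ft = (2 * u) • F + (-(2 * v)) • Ft := by
    rw [hF, hFt, hTe, hu, hv]
    ext i j
    fin_cases i <;> fin_cases j <;>
      simp only [Matrix.add_apply, Matrix.mul_apply, Fin.sum_univ_four, Matrix.smul_apply,
        Matrix.one_apply, Fin.isValue, Matrix.cons_val', Matrix.cons_val_zero, Matrix.cons_val_one,
        Matrix.head_cons, Matrix.empty_val', Matrix.cons_val_fin_one, Matrix.head_fin_const,
        Matrix.cons_val_two, Matrix.cons_val_three, Matrix.tail_cons, Matrix.of_apply,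
        smul_eq_mul, Fin.mk_one, Fin.mk_zero, Fin.zero_eta, Fin.reduceEq, if_true, if_false,
        Fin.ext_iff, Fin.val_zero, Fin.val_one] <;>
      norm_num <;> ring
  have M9 : T * T = (4 * (u ^ 2 + v ^ 2)) • (1 : Matrix (Fin 4) (Fin 4) ℝ) := by
    rw [hTe, hu, hv]
    ext i j
    fin_cases i <;> fin_cases j <;>
      simp only [Matrix.add_apply, Matrix.mul_apply, Fin.sum_univ_four, Matrix.smul_apply,
        Matrix.one_apply, Fin.isValue, Matrix.cons_val', Matrix.cons_val_zero, Matrix.cons_val_one,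
        Matrix.head_cons, Matrix.empty_val', Matrix.cons_val_fin_one, Matrix.head_fin_const,
        Matrix.cons_val_two, Matrix.cons_val_three, Matrix.tail_cons, Matrix.of_apply,
        smul_eq_mul, Fin.mk_one, Fin.mk_zero, Fin.zero_eta, Fin.reduceEq, if_true, if_false,
        Fin.ext_iff, Fin.val_zero, Fin.val_one] <;>
      norm_num <;> ring
  have hD : σ ^ 2 + θ ^ 2 ≠ 0 := ne_of_gt hpos
  intro s t
  rw [hL (t + s), hL t, hL s]
  set a1 := (Real.cosh (t * σ) + Real.cos (t * θ)) / 2 with ha1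
  set b1' := (σ * Real.sinh (t * σ) + θ * Real.sin (t * θ)) / (σ ^ 2 + θ ^ 2) with hb1
  set c1 := (θ * Real.sinh (t * σ) - σ * Real.sin (t * θ)) / (σ ^ 2 + θ ^ 2) with hc1
  set d1 := (Real.cosh (t * σ) - Real.cos (t * θ)) / (2 * (σ ^ 2 + θ ^ 2)) with hd1
  set a2 := (Real.cosh (s * σ) + Real.cos (s * θ)) / 2 with ha2
  set b2' := (σ * Real.sinh (s * σ) + θ * Real.sin (s * θ)) / (σ ^ 2 + θ ^ 2) with hb2
  set c2 := (θ * Real.sinh (s * σ) - σ * Real.sin (s * θ)) / (σ ^ 2 + θ ^ 2) with hc2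
  set d2 := (Real.cosh (s * σ) - Real.cos (s * θ)) / (2 * (σ ^ 2 + θ ^ 2)) with hd2
  have eA : (Real.cosh ((t + s) * σ) + Real.cos ((t + s) * θ)) / 2
      = a1 * a2 + v * (b1' * b2') + (-v) * (c1 * c2) + u * (b1' * c2 + c1 * b2')
        + (4 * (u ^ 2 + v ^ 2)) * (d1 * d2) := by
    rw [ha1, hb1, hc1, hd1, ha2, hb2, hc2, hd2, hueq, hveq]
    simp only [add_mul, Real.cosh_add, Real.cos_add, Real.sinh_add, Real.sin_add]
    field_simp
    ring
  have eB : (σ * Real.sinh ((t + s) * σ) + θ * Real.sin ((t + s) * θ)) / (σ ^ 2 + θ ^ 2)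
      = a1 * b2' + b1' * a2 + (2 * v) * (b1' * d2 + d1 * b2')
        + (2 * u) * (c1 * d2 + d1 * c2) := by
    rw [ha1, hb1, hc1, hd1, ha2, hb2, hc2, hd2, hueq, hveq]
    simp only [add_mul, Real.cosh_add, Real.cos_add, Real.sinh_add, Real.sin_add]
    field_simp
    ring
  have eC : (θ * Real.sinh ((t + s) * σ) - σ * Real.sin ((t + s) * θ)) / (σ ^ 2 + θ ^ 2)
      = a1 * c2 + c1 * a2 + (2 * u) * (b1' * d2 + d1 * b2')
        + (-(2 * v)) * (c1 * d2 + d1 * c2) := by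
    rw [ha1, hb1, hc1, hd1, ha2, hb2, hc2, hd2, hueq, hveq]
    simp only [add_mul, Real.cosh_add, Real.cos_add, Real.sinh_add, Real.sin_add]
    field_simp
    ring
  have eE : (Real.cosh ((t + s) * σ) - Real.cos ((t + s) * θ)) / (2 * (σ ^ 2 + θ ^ 2))
      = a1 * d2 + d1 * a2 + (2⁻¹ : ℝ) * (b1' * b2') + (2⁻¹ : ℝ) * (c1 * c2) := by
    rw [ha1, hb1, hc1, hd1, ha2, hb2, hc2, hd2]
    simp only [add_mul, Real.cosh_add, Real.cos_add, Real.sinh_add, Real.sin_add]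
    field_simp
    ring
  clear_value a1 b1' c1 d1 a2 b2' c2 d2
  rw [eA, eB, eC, eE]
  simp only [Matrix.add_mul, Matrix.mul_add, smul_mul_assoc, mul_smul_comm, Matrix.one_mul,
    Matrix.mul_one, M1, M2, M3, M4, M5, M6, M7, M8, M9, smul_smul, smul_add]
  module
end

section
/- Regarded as a complex matrix, the characteristic polynomial of F factors as det(F − λI) = (λ − σ)(λ + σ)(λ − iθ)(λ + iθ) for every complex λ; in particular the eigenvalues of F are ±σ and ±iθ. -/
set_option maxHeartbeats 1000000

theorem det_fin_four' (a11 a12 a13 a14 a21 a22 a23 a24 a31 a32 a33 a34 a41 a42 a43 a44 : ℂ) :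
    (!![a11,a12,a13,a14;a21,a22,a23,a24;a31,a32,a33,a34;a41,a42,a43,a44] : Matrix (Fin 4) (Fin 4) ℂ).det =
    a11*(a22*(a33*a44-a34*a43)-a23*(a32*a44-a34*a42)+a24*(a32*a43-a33*a42))
    - a12*(a21*(a33*a44-a34*a43)-a23*(a31*a44-a34*a41)+a24*(a31*a43-a33*a41))
    + a13*(a21*(a32*a44-a34*a42)-a22*(a31*a44-a34*a41)+a24*(a31*a42-a32*a41))
    - a14*(a21*(a32*a43-a33*a42)-a22*(a31*a43-a33*a41)+a23*(a31*a42-a32*a41)) := by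
  rw [Matrix.det_succ_row_zero]
  simp [Fin.sum_univ_succ, Matrix.det_fin_three, Matrix.submatrix_apply, Fin.succAbove, Fin.castSucc, Fin.castAdd, Fin.castLE]
  ring

theorem char_poly_F_complex_factorization
    (e1 e2 e3 b1 b2 b3 u v σ θ : ℝ)
    (hu : u = e1 * b1 + e2 * b2 + e3 * b3)
    (hv : v = ((e1 ^ 2 + e2 ^ 2 + e3 ^ 2) - (b1 ^ 2 + b2 ^ 2 + b3 ^ 2)) / 2)
    (hσ : σ = Real.sqrt (Real.sqrt (u ^ 2 + v ^ 2) + v))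
    (hθ : θ = (if u < 0 then (-1 : ℝ) else 1) * Real.sqrt (Real.sqrt (u ^ 2 + v ^ 2) - v))
    (F : Matrix (Fin 4) (Fin 4) ℝ)
    (hF : F = !![0, b3, -b2, e1; -b3, 0, b1, e2; b2, -b1, 0, e3; e1, e2, e3, 0]) :
    ∀ l : ℂ, ((F.map (fun x => (x : ℂ))) - l • (1 : Matrix (Fin 4) (Fin 4) ℂ)).det =
      (l - (σ : ℂ)) * (l + (σ : ℂ)) * (l - Complex.I * (θ : ℂ)) * (l + Complex.I * (θ : ℂ)) := by
  intro l
  set s := Real.sqrt (u ^ 2 + v ^ 2) with hs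
  have hs2 : s ^ 2 = u ^ 2 + v ^ 2 := Real.sq_sqrt (by positivity)
  have hvs : |v| ≤ s := by
    rw [hs]
    calc |v| = Real.sqrt (v ^ 2) := by rw [Real.sqrt_sq_eq_abs]
    _ ≤ Real.sqrt (u ^ 2 + v ^ 2) := Real.sqrt_le_sqrt (by nlinarith [sq_nonneg u])
  have hsp : 0 ≤ s + v := by cases abs_le.mp hvs; linarith
  have hsm : 0 ≤ s - v := by cases abs_le.mp hvs; linarith
  have hσ2 : σ ^ 2 = s + v := by rw [hσ]; exact Real.sq_sqrt hsp
  have hθ2 : θ ^ 2 = s - v := by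
    rw [hθ, mul_pow]
    rcases lt_or_ge u 0 with h | h <;> simp [h, Real.sq_sqrt hsm, not_lt.2]
  have h1 : (σ : ℂ) ^ 2 * (θ : ℂ) ^ 2 = (u : ℂ) ^ 2 := by
    have : σ ^ 2 * θ ^ 2 = u ^ 2 := by rw [hσ2, hθ2]; nlinarith
    exact_mod_cast this
  have h2 : (θ : ℂ) ^ 2 - (σ : ℂ) ^ 2 = -2 * (v : ℂ) := by
    have : θ ^ 2 - σ ^ 2 = -2 * v := by rw [hσ2, hθ2]; ring
    exact_mod_cast this
  have hM : (F.map (fun x => (x : ℂ))) - l • (1 : Matrix (Fin 4) (Fin 4) ℂ)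
      = !![-l, b3, -b2, e1; -b3, -l, b1, e2; b2, -b1, -l, e3; e1, e2, e3, -l] := by
    subst hF
    ext i j
    fin_cases i <;> fin_cases j <;>
      simp [Matrix.sub_apply, Matrix.smul_apply, Matrix.one_apply, Matrix.map_apply]
  have hdet : ((F.map (fun x => (x : ℂ))) - l • (1 : Matrix (Fin 4) (Fin 4) ℂ)).det
      = l ^ 4 - 2 * (v : ℂ) * l ^ 2 - (u : ℂ) ^ 2 := by
    rw [hM, det_fin_four']
    have hu' : (u : ℂ) = e1 * b1 + e2 * b2 + e3 * b3 := by exact_mod_cast congrArg (Complex.ofReal) hu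
    have hv' : (v : ℂ) = ((e1 ^ 2 + e2 ^ 2 + e3 ^ 2) - (b1 ^ 2 + b2 ^ 2 + b3 ^ 2)) / 2 := by
      exact_mod_cast congrArg (Complex.ofReal) hv
    rw [hu', hv']
    ring
  rw [hdet]
  linear_combination ((l ^ 2 - (σ : ℂ) ^ 2) * (θ : ℂ) ^ 2) * Complex.I_sq - l ^ 2 * h2 + h1
end
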